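/- If λ ≠ 0, then for every nonzero vector v ∈ ℂ^{l+1}, the limit lim_{n→∞} ‖Λ^{−n} v‖^{1/n} exists and equals |λ|^{−1}, where Λ is the invertible Jordan block of eigenvalue λ. -/

import Mathlib

/-- The `(l+1)×(l+1)` lower-triangular Jordan block with `lam` on the diagonal
and `1` on the subdiagonal. -/
def jordanBlock (l : ℕ) (lam : ℂ) : Matrix (Fin (l + 1)) (Fin (l + 1)) ℂ :=
  fun i j => if (i : ℕ) = (j : ℕ) then lam else if (i : ℕ) = (j : ℕ) + 1 then 1 else 0

attribute [local instance] Matrix.linftyOpNormedRing Matrix.linftyOpNormedAlgebra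
  Matrix.linftyOpNormedSpace

lemma jordanBlock_triangular (l : ℕ) (lam : ℂ) :
    (jordanBlock l lam).BlockTriangular OrderDual.toDual := by
  intro i j hij
  have h : (i : ℕ) < (j : ℕ) := hij
  simp only [jordanBlock]
  rw [if_neg (by omega), if_neg (by omega)]

lemma jordanBlock_diag (l : ℕ) (lam : ℂ) (i : Fin (l + 1)) :
    jordanBlock l lam i i = lam := by simp [jordanBlock]

lemma aux_rpow_tendsto_one {c : ℝ} (hc : 0 < c) :
    Filter.Tendsto (fun n : ℕ => c ^ ((n : ℝ)⁻¹)) Filter.atTop (nhds 1) := by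
  have h1 : Filter.Tendsto (fun n : ℕ => ((n : ℝ))⁻¹) Filter.atTop (nhds 0) :=
    tendsto_inv_atTop_zero.comp tendsto_natCast_atTop_atTop
  have h2 := (Real.continuousAt_const_rpow (a := c) (b := 0) hc.ne').tendsto.comp h1
  simpa [Function.comp_def] using h2

lemma aux_pow_rpow {a : ℝ} (ha : 0 ≤ a) {n : ℕ} (hn : n ≠ 0) :
    (a ^ n) ^ ((n : ℝ)⁻¹) = a := by
  rw [← Real.rpow_natCast a n, ← Real.rpow_mul ha,
    mul_inv_cancel₀ (by exact_mod_cast hn), Real.rpow_one]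

/-- `‖·‖` on `Fin (l+1) → ℂ` is the sup norm (the Pi norm). -/
theorem jordan_inv_pow_mulVec_growth (l : ℕ) (lam : ℂ) (hlam : lam ≠ 0)
    (v : Fin (l + 1) → ℂ) (hv : v ≠ 0) :
    Filter.Tendsto (fun n : ℕ => ‖((jordanBlock l lam)⁻¹ ^ n).mulVec v‖ ^ ((n : ℝ)⁻¹))
      Filter.atTop (nhds ((‖lam‖)⁻¹)) := by
  set J := jordanBlock l lam with hJ
  have hJtri := jordanBlock_triangular l lam
  rw [← hJ] at hJtri
  have hdet : IsUnit J.det := by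
    rw [Matrix.det_of_lowerTriangular J hJtri]
    simp only [hJ, jordanBlock_diag]
    exact isUnit_iff_ne_zero.mpr (by simp [hlam])
  haveI : Invertible J := J.invertibleOfIsUnitDet hdet
  have hJinvtri : J⁻¹.BlockTriangular OrderDual.toDual :=
    Matrix.blockTriangular_inv_of_blockTriangular hJtri
  -- diagonal entries of J⁻¹
  have hdiag : ∀ i, J⁻¹ i i = lam⁻¹ := by
    intro i
    have h1 : (J⁻¹ * J) i i = 1 := by rw [Matrix.nonsing_inv_mul J hdet]; simp
    rw [Matrix.mul_apply, Finset.sum_eq_single i] at h1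
    · rw [hJ, jordanBlock_diag, ← hJ] at h1
      exact eq_inv_of_mul_eq_one_left h1
    · intro k _ hk
      rcases lt_or_gt_of_ne hk with h | h
      · rw [hJtri (show OrderDual.toDual i < OrderDual.toDual k from h), mul_zero]
      · rw [hJinvtri (show OrderDual.toDual k < OrderDual.toDual i from h), zero_mul]

    · simp
  -- spectrum of J
  have hspecJ : spectrum ℂ J = {lam} := by
    ext μ
    rw [spectrum.mem_iff, Matrix.algebraMap_eq_diagonal, Matrix.isUnit_iff_isUnit_det,
      Matrix.det_of_lowerTriangular _ ((Matrix.blockTriangular_diagonal _).sub hJtri)]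
    simp only [Matrix.sub_apply, Matrix.diagonal_apply_eq, hJ, jordanBlock_diag,
      Set.mem_singleton_iff, isUnit_iff_ne_zero, not_ne_iff, Finset.prod_const,
      Finset.card_univ, Fintype.card_fin, Pi.algebraMap_apply, Algebra.algebraMap_self,
      RingHom.id_apply]
    rw [pow_eq_zero_iff (Nat.succ_ne_zero l), sub_eq_zero]
  -- spectrum of J⁻¹
  have hspec : spectrum ℂ (J⁻¹) = {lam⁻¹} := by
    have := spectrum.map_inv (𝕜 := ℂ) (unitOfInvertible J)
    rw [show ((unitOfInvertible J : (Matrix (Fin (l+1)) (Fin (l+1)) ℂ)ˣ) : Matrix (Fin (l+1)) (Fin (l+1)) ℂ) = J from rfl] at this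
    rw [show (((unitOfInvertible J)⁻¹ : (Matrix (Fin (l+1)) (Fin (l+1)) ℂ)ˣ) : Matrix (Fin (l+1)) (Fin (l+1)) ℂ) = ⅟J from rfl,
      Matrix.invOf_eq_nonsing_inv] at this
    rw [← this, hspecJ, Set.inv_singleton]
  -- spectral radius
  have hrad : spectralRadius ℂ (J⁻¹) = (‖lam⁻¹‖₊ : ENNReal) := by
    rw [spectralRadius, hspec]
    simp
  -- Gelfand's formula, real version
  have hG : Filter.Tendsto (fun n : ℕ => ‖(J⁻¹) ^ n‖ ^ ((n : ℝ)⁻¹)) Filter.atTop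
      (nhds ((‖lam‖)⁻¹)) := by
    have h := spectrum.pow_nnnorm_pow_one_div_tendsto_nhds_spectralRadius (J⁻¹)
    rw [hrad] at h
    have h2 := (ENNReal.tendsto_toReal (by simp)).comp h
    simp only [Function.comp_def] at h2
    have h3 : ∀ n : ℕ, (((‖(J⁻¹) ^ n‖₊ : ENNReal)) ^ (1 / (n : ℝ))).toReal
        = ‖(J⁻¹) ^ n‖ ^ ((n : ℝ)⁻¹) := by
      intro n
      rw [← ENNReal.toReal_rpow, one_div]
      simp
    simp only [h3] at h2
    convert h2 using 2
    simp [norm_inv]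
  -- minimal index with nonzero coordinate
  classical
  have hex : ∃ i, v i ≠ 0 := by
    by_contra h; push_neg at h; exact hv (funext fun i => h i)
  obtain ⟨iw, hiw⟩ := hex
  set S : Finset (Fin (l + 1)) := Finset.univ.filter (fun i => v i ≠ 0) with hS
  have hSne : S.Nonempty := ⟨iw, by simp [hS, hiw]⟩
  set i0 := S.min' hSne with hi0
  have hvi0 : v i0 ≠ 0 := by
    have h := Finset.mem_filter.mp (S.min'_mem hSne)
    exact h.2
  have hmin : ∀ j, j < i0 → v j = 0 := by
    intro j hj
    by_contra h
    exact absurd (S.min'_le j (by simp [hS, h])) (not_le.mpr hj)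
  -- key induction: behavior of the first nonzero coordinate
  have key : ∀ n : ℕ, (∀ j, j < i0 → ((J⁻¹ ^ n).mulVec v) j = 0) ∧
      ((J⁻¹ ^ n).mulVec v) i0 = lam⁻¹ ^ n * v i0 := by
    intro n
    induction n with
    | zero =>
      refine ⟨fun j hj => ?_, ?_⟩ <;> simp [Matrix.one_mulVec]
      · exact hmin j hj
    | succ n ih =>
      have hrw : (J⁻¹ ^ (n + 1)).mulVec v = J⁻¹.mulVec ((J⁻¹ ^ n).mulVec v) := by
        rw [Matrix.mulVec_mulVec, ← pow_succ']
      constructor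
      · intro j hj
        rw [hrw]
        show ∑ k, J⁻¹ j k * ((J⁻¹ ^ n).mulVec v) k = 0
        refine Finset.sum_eq_zero fun k _ => ?_
        rcases lt_or_ge j k with h | h
        · rw [hJinvtri (show OrderDual.toDual k < OrderDual.toDual j from h), zero_mul]
        · rw [ih.1 k (lt_of_le_of_lt h hj), mul_zero]
      · rw [hrw]
        show ∑ k, J⁻¹ i0 k * ((J⁻¹ ^ n).mulVec v) k = _
        rw [Finset.sum_eq_single i0]
        · rw [hdiag, ih.2, pow_succ']
          ring
        · intro k _ hk
          rcases lt_or_gt_of_ne hk with h | h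
          · rw [ih.1 k h, mul_zero]
          · rw [hJinvtri (show OrderDual.toDual k < OrderDual.toDual i0 from h), zero_mul]
        · simp
  -- lower and upper bounds
  have hlow : ∀ n : ℕ, (‖lam‖)⁻¹ ^ n * ‖v i0‖ ≤ ‖(J⁻¹ ^ n).mulVec v‖ := by
    intro n
    have h1 := norm_le_pi_norm ((J⁻¹ ^ n).mulVec v) i0
    rw [(key n).2] at h1
    calc (‖lam‖)⁻¹ ^ n * ‖v i0‖ = ‖lam⁻¹ ^ n * v i0‖ := by
          simp [norm_mul, norm_pow, norm_inv]
      _ ≤ _ := h1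
  have hup : ∀ n : ℕ, ‖(J⁻¹ ^ n).mulVec v‖ ≤ ‖J⁻¹ ^ n‖ * ‖v‖ := fun n =>
    Matrix.linfty_opNorm_mulVec _ _
  have hvi0' : (0 : ℝ) < ‖v i0‖ := norm_pos_iff.mpr hvi0
  have hvpos : (0 : ℝ) < ‖v‖ := norm_pos_iff.mpr hv
  have habs : (0 : ℝ) ≤ (‖lam‖)⁻¹ := by positivity
  -- limits of the bounding sequences
  have hlowT : Filter.Tendsto (fun n : ℕ => (‖lam‖)⁻¹ * ‖v i0‖ ^ ((n : ℝ)⁻¹))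
      Filter.atTop (nhds ((‖lam‖)⁻¹)) := by
    have h := (tendsto_const_nhds (x := (‖lam‖)⁻¹) (f := Filter.atTop (α := ℕ))).mul
      (aux_rpow_tendsto_one hvi0')
    simpa using h
  have hupT : Filter.Tendsto (fun n : ℕ => ‖J⁻¹ ^ n‖ ^ ((n : ℝ)⁻¹) * ‖v‖ ^ ((n : ℝ)⁻¹))
      Filter.atTop (nhds ((‖lam‖)⁻¹)) := by
    have := hG.mul (aux_rpow_tendsto_one hvpos)
    simpa using this
  refine tendsto_of_tendsto_of_tendsto_of_le_of_le' hlowT hupT ?_ ?_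
  · filter_upwards [Filter.eventually_ge_atTop 1] with n hn
    have hinv : (0 : ℝ) ≤ (n : ℝ)⁻¹ := by positivity
    calc (‖lam‖)⁻¹ * ‖v i0‖ ^ ((n : ℝ)⁻¹)
        = ((‖lam‖)⁻¹ ^ n * ‖v i0‖) ^ ((n : ℝ)⁻¹) := by
          rw [Real.mul_rpow (by positivity) (norm_nonneg _),
            aux_pow_rpow habs (by omega)]
      _ ≤ ‖(J⁻¹ ^ n).mulVec v‖ ^ ((n : ℝ)⁻¹) :=
          Real.rpow_le_rpow (by positivity) (hlow n) hinv
  · filter_upwards [Filter.eventually_ge_atTop 1] with n hn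
    have hinv : (0 : ℝ) ≤ (n : ℝ)⁻¹ := by positivity
    calc ‖(J⁻¹ ^ n).mulVec v‖ ^ ((n : ℝ)⁻¹)
        ≤ (‖J⁻¹ ^ n‖ * ‖v‖) ^ ((n : ℝ)⁻¹) :=
          Real.rpow_le_rpow (norm_nonneg _) (hup n) hinv
      _ = ‖J⁻¹ ^ n‖ ^ ((n : ℝ)⁻¹) * ‖v‖ ^ ((n : ℝ)⁻¹) :=
          Real.mul_rpow (norm_nonneg _) (norm_nonneg _)
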